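/- Let d ∈ ℕ with d ≥ 4. Then for every f ∈ l^2(ℤ^d) one has ‖ sup_{t ∈ 𝔻, t ≤ √d} |(𝓜_t − 𝓢_t) f| ‖_{l^2(ℤ^d)} ≤ 6 · ‖f‖_{l^2(ℤ^d)}. -/

import Mathlib

open Finset MeasureTheory
open scoped ENNReal NNReal Classical

noncomputable section

/-- The lattice points of the closed `l¹` ball of radius `t` in `ℤ^d`. -/
def latticeBall (d t : ℕ) : Finset (Fin d → ℤ) :=
  (Finset.Icc (fun _ => -(t : ℤ)) (fun _ => (t : ℤ))).filter fun y => ∑ i, |y i| ≤ (t : ℤ)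

/-- `S_t = {x ∈ {-1,0,1}^d : Σ |x_i| = t}`. -/
def sphereS (d t : ℕ) : Finset (Fin d → ℤ) :=
  (Finset.Icc (fun _ => (-1 : ℤ)) (fun _ => (1 : ℤ))).filter fun y => ∑ i, |y i| = (t : ℤ)

/-- `𝓜_t f (x) = |B_t ∩ ℤ^d|⁻¹ Σ_{y ∈ B_t ∩ ℤ^d} f (x - y)`. -/
def Mop (d t : ℕ) (f : (Fin d → ℤ) → ℂ) (x : Fin d → ℤ) : ℂ :=
  ((latticeBall d t).card : ℂ)⁻¹ * ∑ y ∈ latticeBall d t, f (x - y)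

/-- `𝓢_t f (x) = |S_t|⁻¹ Σ_{y ∈ S_t} f (x - y)`. -/
def Sop (d t : ℕ) (f : (Fin d → ℤ) → ℂ) (x : Fin d → ℤ) : ℂ :=
  ((sphereS d t).card : ℂ)⁻¹ * ∑ y ∈ sphereS d t, f (x - y)

lemma mem_latticeBall {d t : ℕ} {y : Fin d → ℤ} :
    y ∈ latticeBall d t ↔ ∑ i, |y i| ≤ (t : ℤ) := by
  simp only [latticeBall, Finset.mem_filter, Finset.mem_Icc, and_iff_right_iff_imp]
  intro h
  have hi : ∀ i, |y i| ≤ (t:ℤ) := fun i => le_trans (Finset.single_le_sum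
      (f := fun i => |y i|) (fun i _ => abs_nonneg _) (Finset.mem_univ i)) h
  exact ⟨fun i => neg_le_of_abs_le (hi i), fun i => le_of_abs_le (hi i)⟩

lemma mem_sphereS {d t : ℕ} {y : Fin d → ℤ} :
    y ∈ sphereS d t ↔ (∀ i, |y i| ≤ 1) ∧ ∑ i, |y i| = (t : ℤ) := by
  simp only [sphereS, Finset.mem_filter, Finset.mem_Icc]
  constructor
  · rintro ⟨h1, h2⟩
    exact ⟨fun i => abs_le.2 ⟨(h1.1 i), (h1.2 i)⟩, h2⟩
  · rintro ⟨h1, h2⟩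
    exact ⟨⟨fun i => (abs_le.1 (h1 i)).1, fun i => (abs_le.1 (h1 i)).2⟩, h2⟩

lemma sphere_subset_ball {d t : ℕ} (ht : 1 ≤ t) : sphereS d t ⊆ latticeBall d t := by
  intro y hy
  rw [mem_sphereS] at hy
  exact mem_latticeBall.2 hy.2.le

lemma sphere_nonempty {d t : ℕ} (htd : t ≤ d) : (sphereS d t).Nonempty := by
  refine ⟨fun i => if (i : ℕ) < t then 1 else 0, mem_sphereS.2 ⟨fun i => ?_, ?_⟩⟩
  · split <;> simp
  · have : ∀ i : Fin d, |if (i : ℕ) < t then (1:ℤ) else 0| = if (i:ℕ) < t then 1 else 0 := by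
      intro i; split <;> simp
    simp only [this, Finset.sum_ite_mem]
    rw [Finset.sum_boole]
    norm_cast
    have : (Finset.univ.filter fun i : Fin d => (i : ℕ) < t) =
        (Finset.range t).attachFin (fun m hm => lt_of_lt_of_le (Finset.mem_range.1 hm) htd) := by
      ext i
      simp [Finset.mem_attachFin]
    rw [this, Finset.card_attachFin, Finset.card_range]

/-- The moves relation for double counting. -/
def rel (d : ℕ) (y z : Fin d → ℤ) : Prop :=
  (∃ i, y i = 0 ∧ (z = Function.update y i 1 ∨ z = Function.update y i (-1)))
  ∨ (∃ p : Fin d × Fin d, 2 ≤ |y p.1| ∧ y p.2 = 0 ∧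
      (z = Function.update (Function.update y p.1 (y p.1 - Int.sign (y p.1))) p.2 1 ∨
       z = Function.update (Function.update y p.1 (y p.1 - Int.sign (y p.1))) p.2 (-1)))

lemma abs_sub_sign {a : ℤ} (ha : 2 ≤ |a|) : |a - Int.sign a| = |a| - 1 := by
  rcases le_abs.mp ha with h | h
  · rw [Int.sign_eq_one_of_pos (show (0:ℤ) < a by omega),
      abs_of_nonneg (by omega : (0:ℤ) ≤ a - 1), abs_of_nonneg (by omega : (0:ℤ) ≤ a)]
  · rw [Int.sign_eq_neg_one_of_neg (show a < (0:ℤ) by omega),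
      abs_of_nonpos (by omega : a - -1 ≤ 0), abs_of_nonpos (by omega : a ≤ 0)]
    ring

lemma sign_sub_sign {a : ℤ} (ha : 2 ≤ |a|) :
    Int.sign (a - Int.sign a) = Int.sign a := by
  rcases le_abs.mp ha with h | h
  · rw [Int.sign_eq_one_of_pos (show (0:ℤ) < a by omega)]
    exact Int.sign_eq_one_of_pos (by omega)
  · rw [Int.sign_eq_neg_one_of_neg (show a < (0:ℤ) by omega)]
    exact Int.sign_eq_neg_one_of_neg (by omega)

lemma mass_update {d : ℕ} (y : Fin d → ℤ) (i : Fin d) (v : ℤ) :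
    ∑ j, |Function.update y i v j| = ∑ j, |y j| - |y i| + |v| := by
  have h : ∀ j, |Function.update y i v j| = Function.update (fun j => |y j|) i |v| j := by
    intro j; rcases eq_or_ne j i with rfl | h
    · simp
    · simp [Function.update_of_ne h]
  simp_rw [h]
  rw [Finset.sum_update_of_mem (Finset.mem_univ i),
    Finset.sum_sdiff_eq_sub (Finset.singleton_subset_iff.2 (Finset.mem_univ i)),
    Finset.sum_singleton]
  ring

/-- support cardinality is at most mass -/
lemma card_support_le {d : ℕ} (y : Fin d → ℤ) :
    ((Finset.univ.filter fun i => y i ≠ 0).card : ℤ) ≤ ∑ i, |y i| := by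
  classical
  calc ((Finset.univ.filter fun i => y i ≠ 0).card : ℤ)
      = ∑ i ∈ Finset.univ.filter (fun i => y i ≠ 0), 1 := by simp
    _ ≤ ∑ i ∈ Finset.univ.filter (fun i => y i ≠ 0), |y i| := by
        refine Finset.sum_le_sum fun i hi => ?_
        have : y i ≠ 0 := (Finset.mem_filter.1 hi).2
        exact Int.one_le_abs this
    _ ≤ ∑ i, |y i| := Finset.sum_le_sum_of_subset_of_nonneg (Finset.filter_subset _ _)
        (fun i _ _ => abs_nonneg _)

lemma two_t_le {t d : ℕ} (ht : 1 ≤ t) (htd : t^2 ≤ d) : 2*t ≤ d + 2 := by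
  have h : (2*t:ℤ) ≤ (t:ℤ)^2 + 2 := by nlinarith [sq_nonneg ((t:ℤ) - 1)]
  have h2 : (t:ℤ)^2 ≤ (d:ℤ) := by exact_mod_cast htd
  omega

lemma lower_bound {d t : ℕ} (ht : 1 ≤ t) (htd : t^2 ≤ d)
    (y : Fin d → ℤ) (hy : y ∈ latticeBall d t \ sphereS d t) :
    d ≤ (Finset.bipartiteAbove (rel d) (latticeBall d t) y).card := by
  rw [Finset.mem_sdiff] at hy
  obtain ⟨hyB, hyS⟩ := hy
  rw [mem_latticeBall] at hyB
  set K := Finset.univ.filter (fun i => y i ≠ 0) with hK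
  set Z0 := Finset.univ.filter (fun i => y i = 0) with hZ0
  have hcards : Z0.card + K.card = d := by
    rw [hZ0, hK]
    rw [Finset.card_filter_add_card_filter_not (fun i => y i = 0)]
    exact Finset.card_univ.trans (Fintype.card_fin d)
  have hKt : (K.card : ℤ) ≤ ∑ i, |y i| := card_support_le y
  -- in both cases we will produce an injection from Z0 ×ˢ {1, -1}
  have habs : ∀ i ∈ Z0, y i = 0 := fun i hi => (Finset.mem_filter.1 hi).2
  have hDcard : (Z0 ×ˢ ({1, -1} : Finset ℤ)).card = 2 * Z0.card := by
    rw [Finset.card_product]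
    norm_num [mul_comm]
  have main : ∀ g : Fin d × ℤ → (Fin d → ℤ),
      (∀ p ∈ Z0 ×ˢ ({1, -1} : Finset ℤ),
        g p ∈ Finset.bipartiteAbove (rel d) (latticeBall d t) y) →
      (Set.InjOn g ↑(Z0 ×ˢ ({1, -1} : Finset ℤ))) →
      K.card ≤ t - 1 →
      d ≤ (Finset.bipartiteAbove (rel d) (latticeBall d t) y).card := by
    intro g hmap hinj hKcard
    have h1 : (Z0 ×ˢ ({1, -1} : Finset ℤ)).card ≤
        (Finset.bipartiteAbove (rel d) (latticeBall d t) y).card :=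
      Finset.card_le_card_of_injOn g hmap hinj
    have h2 := two_t_le ht htd
    omega
  rcases lt_or_eq_of_le hyB with hlt | heq
  -- Case 1 : mass < t
  · have hKcard : K.card ≤ t - 1 := by
      have : (K.card : ℤ) < t := lt_of_le_of_lt hKt hlt
      have ht' : K.card < t := by exact_mod_cast this
      omega
    refine main (fun p => Function.update y p.1 p.2) ?_ ?_ hKcard
    · rintro ⟨i, v⟩ hp
      rw [Finset.mem_product] at hp
      obtain ⟨hi, hv⟩ := hp
      have hyi : y i = 0 := habs i hi
      have hv' : v = 1 ∨ v = -1 := by simpa using hv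
      rw [Finset.mem_bipartiteAbove]
      constructor
      · rw [mem_latticeBall, mass_update, hyi]
        have : |v| = 1 := by rcases hv' with rfl | rfl <;> norm_num
        rw [this]
        simp only [abs_zero, sub_zero]
        omega
      · refine Or.inl ⟨i, hyi, ?_⟩
        dsimp only
        rcases hv' with rfl | rfl
        exacts [Or.inl rfl, Or.inr rfl]
    · rintro ⟨i, v⟩ hp ⟨i', v'⟩ hp' hgeq
      replace hp := Finset.mem_product.1 (Finset.mem_coe.1 hp)
      replace hp' := Finset.mem_product.1 (Finset.mem_coe.1 hp')
      have hyi : y i = 0 := habs i hp.1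
      have hyi' : y i' = 0 := habs i' hp'.1
      have hv : v = 1 ∨ v = -1 := by simpa using hp.2
      have hv' : v' = 1 ∨ v' = -1 := by simpa using hp'.2
      simp only at hgeq
      by_cases hii : i = i'
      · subst hii
        have := congrFun hgeq i
        simp only [Function.update_self] at this
        exact Prod.ext rfl this
      · exfalso
        have := congrFun hgeq i
        rw [Function.update_self, Function.update_of_ne hii, hyi] at this
        rcases hv with rfl | rfl <;> simp at this
  -- Case 2 : mass = t, some coordinate has |y i| ≥ 2
  · have hex : ∃ i₀, 2 ≤ |y i₀| := by
      by_contra hno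
      push_neg at hno
      exact hyS (mem_sphereS.2 ⟨fun i => by have := hno i; omega, heq⟩)
    obtain ⟨i₀, hi₀⟩ := hex
    have hyi₀ : y i₀ ≠ 0 := by intro h; rw [h] at hi₀; simp at hi₀
    have hi₀K : i₀ ∈ K := Finset.mem_filter.2 ⟨Finset.mem_univ _, hyi₀⟩
    have hKcard : K.card ≤ t - 1 := by
      have hsum : (K.card : ℤ) + 1 ≤ ∑ i, |y i| := by
        have h1 : ∑ i ∈ K, |y i| = |y i₀| + ∑ i ∈ K.erase i₀, |y i| :=
          (Finset.add_sum_erase K (fun i => |y i|) hi₀K).symm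
        have h2 : ((K.erase i₀).card : ℤ) ≤ ∑ i ∈ K.erase i₀, |y i| := by
          calc ((K.erase i₀).card : ℤ) = ∑ i ∈ K.erase i₀, 1 := by simp
            _ ≤ ∑ i ∈ K.erase i₀, |y i| := Finset.sum_le_sum fun i hi =>
                Int.one_le_abs (Finset.mem_filter.1 (Finset.mem_of_mem_erase hi)).2
        have h3 : ∑ i ∈ K, |y i| ≤ ∑ i, |y i| :=
          Finset.sum_le_sum_of_subset_of_nonneg (Finset.filter_subset _ _)
            (fun i _ _ => abs_nonneg _)
        have h4 : (K.erase i₀).card = K.card - 1 := Finset.card_erase_of_mem hi₀K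
        have h5 : 1 ≤ K.card := Finset.card_pos.2 ⟨i₀, hi₀K⟩
        have h6 : ((K.erase i₀).card : ℤ) = (K.card : ℤ) - 1 := by
          rw [h4]; push_cast [h5]; omega
        omega
      rw [heq] at hsum
      have : K.card + 1 ≤ t := by exact_mod_cast hsum
      omega
    set w := y i₀ - Int.sign (y i₀) with hw
    have hmass_inner : ∑ j, |Function.update y i₀ w j| = (∑ j, |y j|) - 1 := by
      rw [mass_update, hw, abs_sub_sign hi₀]
      ring
    refine main (fun p => Function.update (Function.update y i₀ w) p.1 p.2) ?_ ?_ hKcard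
    · rintro ⟨j, v⟩ hp
      rw [Finset.mem_product] at hp
      obtain ⟨hj, hv⟩ := hp
      have hyj : y j = 0 := habs j hj
      have hji₀ : j ≠ i₀ := fun h => hyi₀ (h ▸ hyj)
      have hv' : v = 1 ∨ v = -1 := by simpa using hv
      rw [Finset.mem_bipartiteAbove]
      constructor
      · rw [mem_latticeBall, mass_update, hmass_inner,
          Function.update_of_ne hji₀, hyj]
        have : |v| = 1 := by rcases hv' with rfl | rfl <;> norm_num
        rw [this]
        simp only [abs_zero, sub_zero]
        omega
      · refine Or.inr ⟨(i₀, j), hi₀, hyj, ?_⟩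
        dsimp only
        rcases hv' with rfl | rfl
        exacts [Or.inl rfl, Or.inr rfl]
    · rintro ⟨j, v⟩ hp ⟨j', v'⟩ hp' hgeq
      replace hp := Finset.mem_product.1 (Finset.mem_coe.1 hp)
      replace hp' := Finset.mem_product.1 (Finset.mem_coe.1 hp')
      simp only at hgeq
      have hyj : y j = 0 := habs j hp.1
      have hyj' : y j' = 0 := habs j' hp'.1
      have hji₀ : j ≠ i₀ := fun h => hyi₀ (h ▸ hyj)
      have hji₀' : j' ≠ i₀ := fun h => hyi₀ (h ▸ hyj')
      have hv : v = 1 ∨ v = -1 := by simpa using hp.2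
      have hv' : v' = 1 ∨ v' = -1 := by simpa using hp'.2
      by_cases hjj : j = j'
      · subst hjj
        have := congrFun hgeq j
        simp only [Function.update_self] at this
        exact Prod.ext rfl this
      · exfalso
        have := congrFun hgeq j
        rw [Function.update_self, Function.update_of_ne hjj,
          Function.update_of_ne hji₀, hyj] at this
        rcases hv with rfl | rfl <;> simp at this

lemma upper_bound {d t : ℕ} (hd : 0 < d) (z : Fin d → ℤ) (hz : z ∈ latticeBall d t) :
    (Finset.bipartiteBelow (rel d) (latticeBall d t \ sphereS d t) z).card ≤ t + t * t := by
  rw [mem_latticeBall] at hz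
  set Z := Finset.univ.filter (fun i => z i ≠ 0) with hZdef
  have hZ : Z.card ≤ t := by
    have h1 : (Z.card : ℤ) ≤ ∑ i, |z i| := card_support_le z
    have := h1.trans hz
    exact_mod_cast this
  -- reconstruction function
  set recon : Fin d ⊕ Fin d × Fin d → (Fin d → ℤ) := fun s =>
    match s with
    | Sum.inl i => Function.update z i 0
    | Sum.inr (i, j) => Function.update (Function.update z j 0) i (z i + Int.sign (z i))
    with hrecon
  set F : (Fin d → ℤ) → Fin d ⊕ Fin d × Fin d := fun y =>
    if h : (∃ i, y i = 0 ∧ (z = Function.update y i 1 ∨ z = Function.update y i (-1)))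
      then Sum.inl h.choose
    else if h2 : (∃ p : Fin d × Fin d, 2 ≤ |y p.1| ∧ y p.2 = 0 ∧
        (z = Function.update (Function.update y p.1 (y p.1 - Int.sign (y p.1))) p.2 1 ∨
         z = Function.update (Function.update y p.1 (y p.1 - Int.sign (y p.1))) p.2 (-1)))
      then Sum.inr h2.choose
    else Sum.inl ⟨0, hd⟩
    with hF
  have rec1 : ∀ y : Fin d → ℤ,
      (h : ∃ i, y i = 0 ∧ (z = Function.update y i 1 ∨ z = Function.update y i (-1))) →
      y = Function.update z h.choose 0 ∧ z h.choose ≠ 0 := by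
    intro y h
    obtain ⟨hyi, hcase⟩ := h.choose_spec
    set i := h.choose
    have key : ∃ v : ℤ, v ≠ 0 ∧ z = Function.update y i v := by
      rcases hcase with hc | hc
      · exact ⟨1, one_ne_zero, hc⟩
      · exact ⟨-1, by norm_num, hc⟩
    obtain ⟨v, hv0, hzv⟩ := key
    constructor
    · funext l
      rcases eq_or_ne l i with rfl | hl
      · rw [Function.update_self, hyi]
      · rw [Function.update_of_ne hl, hzv, Function.update_of_ne hl]
    · rw [hzv, Function.update_self]; exact hv0
  have rec2 : ∀ y : Fin d → ℤ,
      (h2 : ∃ p : Fin d × Fin d, 2 ≤ |y p.1| ∧ y p.2 = 0 ∧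
        (z = Function.update (Function.update y p.1 (y p.1 - Int.sign (y p.1))) p.2 1 ∨
         z = Function.update (Function.update y p.1 (y p.1 - Int.sign (y p.1))) p.2 (-1))) →
      y = Function.update (Function.update z h2.choose.2 0) h2.choose.1
          (z h2.choose.1 + Int.sign (z h2.choose.1)) ∧
        z h2.choose.1 ≠ 0 ∧ z h2.choose.2 ≠ 0 := by
    intro y h2
    obtain ⟨habs2, hyj, hcase⟩ := h2.choose_spec
    set i := h2.choose.1
    set j := h2.choose.2
    have hij : i ≠ j := by
      intro hij
      rw [hij, hyj] at habs2
      simp at habs2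
    have key : ∃ v : ℤ, v ≠ 0 ∧
        z = Function.update (Function.update y i (y i - Int.sign (y i))) j v := by
      rcases hcase with hc | hc
      · exact ⟨1, one_ne_zero, hc⟩
      · exact ⟨-1, by norm_num, hc⟩
    obtain ⟨v, hv0, hzv⟩ := key
    have hzj : z j = v := by rw [hzv, Function.update_self]
    have hzi : z i = y i - Int.sign (y i) := by
      rw [hzv, Function.update_of_ne hij, Function.update_self]
    have hzi0 : z i ≠ 0 := by
      intro h0
      have : |y i - Int.sign (y i)| = |y i| - 1 := abs_sub_sign habs2
      rw [← hzi, h0] at this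
      simp only [abs_zero] at this
      omega
    have hsign : Int.sign (z i) = Int.sign (y i) := by
      rw [hzi]; exact sign_sub_sign habs2
    refine ⟨?_, hzi0, by rw [hzj]; exact hv0⟩
    funext l
    rcases eq_or_ne l i with rfl | hli
    · rw [Function.update_self, hsign, hzi]; ring
    · rcases eq_or_ne l j with rfl | hlj
      · rw [Function.update_of_ne hli, Function.update_self, hyj]
      · rw [Function.update_of_ne hli, Function.update_of_ne hlj, hzv,
          Function.update_of_ne hlj, Function.update_of_ne hli]
  have main : ∀ y ∈ Finset.bipartiteBelow (rel d) (latticeBall d t \ sphereS d t) z,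
      y = recon (F y) ∧ F y ∈ Z.disjSum (Z ×ˢ Z) := by
    intro y hy
    rw [Finset.mem_bipartiteBelow] at hy
    obtain ⟨hyBS, hyrel⟩ := hy
    by_cases h : (∃ i, y i = 0 ∧ (z = Function.update y i 1 ∨ z = Function.update y i (-1)))
    · have hFy : F y = Sum.inl h.choose := dif_pos h
      obtain ⟨hy1, hy2⟩ := rec1 y h
      refine ⟨by rw [hFy, hrecon]; exact hy1, ?_⟩
      rw [hFy]
      exact Finset.inl_mem_disjSum.2 (Finset.mem_filter.2 ⟨Finset.mem_univ _, hy2⟩)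
    · have h2 : (∃ p : Fin d × Fin d, 2 ≤ |y p.1| ∧ y p.2 = 0 ∧
        (z = Function.update (Function.update y p.1 (y p.1 - Int.sign (y p.1))) p.2 1 ∨
         z = Function.update (Function.update y p.1 (y p.1 - Int.sign (y p.1))) p.2 (-1))) :=
        hyrel.resolve_left h
      have hFy : F y = Sum.inr h2.choose := (dif_neg h).trans (dif_pos h2)
      obtain ⟨hy1, hy2, hy3⟩ := rec2 y h2
      refine ⟨?_, ?_⟩
      · rw [hFy, hrecon]
        exact hy1
      · rw [hFy]
        refine Finset.inr_mem_disjSum.2 (Finset.mem_product.2 ⟨?_, ?_⟩)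
        · exact Finset.mem_filter.2 ⟨Finset.mem_univ _, hy2⟩
        · exact Finset.mem_filter.2 ⟨Finset.mem_univ _, hy3⟩
  calc (Finset.bipartiteBelow (rel d) (latticeBall d t \ sphereS d t) z).card
      ≤ (Z.disjSum (Z ×ˢ Z)).card := by
        refine Finset.card_le_card_of_injOn F (fun y hy => (main y hy).2) ?_
        intro y hy y' hy' heq
        rw [(main y (Finset.mem_coe.1 hy)).1, (main y' (Finset.mem_coe.1 hy')).1, heq]
    _ = Z.card + Z.card * Z.card := by rw [Finset.card_disjSum, Finset.card_product]
    _ ≤ t + t * t := by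
        have := hZ
        exact Nat.add_le_add hZ (Nat.mul_le_mul hZ hZ)

lemma key_count {d t : ℕ} (hd : 0 < d) (ht : 1 ≤ t) (htd : t^2 ≤ d) :
    ((latticeBall d t).card - (sphereS d t).card) * d ≤ (t + t*t) * (latticeBall d t).card := by
  have h := Finset.card_mul_le_card_mul (rel d)
    (s := latticeBall d t \ sphereS d t) (t := latticeBall d t)
    (fun y hy => lower_bound ht htd y hy)
    (fun z hz => upper_bound hd z hz)
  rw [Finset.card_sdiff_of_subset (sphere_subset_ball ht)] at h
  calc ((latticeBall d t).card - (sphereS d t).card) * d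
      ≤ (latticeBall d t).card * (t + t * t) := h
    _ = (t + t*t) * (latticeBall d t).card := mul_comm _ _

lemma tsum_translate {d : ℕ} (f : (Fin d → ℤ) → ℂ) (y : Fin d → ℤ) :
    ∑' x : Fin d → ℤ, (‖f (x - y)‖₊ : ℝ≥0∞) ^ (2:ℝ)
      = ∑' x : Fin d → ℤ, (‖f x‖₊ : ℝ≥0∞) ^ (2:ℝ) :=
  (Equiv.subRight y).tsum_eq (fun x => (‖f x‖₊ : ℝ≥0∞) ^ (2:ℝ))

lemma rpow_tsum_scalar {α : Type*} (c : ℝ≥0∞) (g : α → ℝ≥0∞) :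
    (∑' x, (c * g x) ^ (2:ℝ)) ^ ((1:ℝ)/2) = c * (∑' x, g x ^ (2:ℝ)) ^ ((1:ℝ)/2) := by
  have h1 : ∀ x, (c * g x) ^ (2:ℝ) = c ^ (2:ℝ) * g x ^ (2:ℝ) := fun x =>
    ENNReal.mul_rpow_of_nonneg _ _ (by norm_num)
  simp_rw [h1]
  rw [ENNReal.tsum_mul_left,
    ENNReal.mul_rpow_of_nonneg _ _ (by norm_num : (0:ℝ) ≤ 1/2),
    ← ENNReal.rpow_mul]
  norm_num

lemma minkowski_add {α : Type*} [MeasurableSpace α] [MeasurableSingletonClass α]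
    [Countable α] (g h : α → ℝ≥0∞) :
    (∑' x, (g x + h x) ^ (2:ℝ)) ^ ((1:ℝ)/2)
      ≤ (∑' x, g x ^ (2:ℝ)) ^ ((1:ℝ)/2) + (∑' x, h x ^ (2:ℝ)) ^ ((1:ℝ)/2) := by
  have := ENNReal.lintegral_Lp_add_le (μ := Measure.count) (p := 2)
    (measurable_of_countable g).aemeasurable (measurable_of_countable h).aemeasurable
    (by norm_num : (1:ℝ) ≤ 2)
  simpa [lintegral_count] using this

lemma master {d : ℕ} {ι : Type*} (A : Finset ι) (w : ι → ℝ≥0∞) (p : ι → (Fin d → ℤ))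
    (f : (Fin d → ℤ) → ℂ) :
    (∑' x : Fin d → ℤ, (∑ a ∈ A, w a * (‖f (x - p a)‖₊ : ℝ≥0∞)) ^ (2:ℝ)) ^ ((1:ℝ)/2)
      ≤ (∑ a ∈ A, w a) * (∑' x : Fin d → ℤ, (‖f x‖₊ : ℝ≥0∞) ^ (2:ℝ)) ^ ((1:ℝ)/2) := by
  classical
  induction A using Finset.induction_on with
  | empty =>
      simp only [Finset.sum_empty]
      rw [ENNReal.zero_rpow_of_pos (by norm_num : (0:ℝ) < 2)]
      simp [ENNReal.zero_rpow_of_pos]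
  | insert a s ha ih =>
      simp only [Finset.sum_insert ha]
      calc (∑' x : Fin d → ℤ,
            (w a * (‖f (x - p a)‖₊ : ℝ≥0∞) + ∑ b ∈ s, w b * (‖f (x - p b)‖₊ : ℝ≥0∞)) ^ (2:ℝ))
            ^ ((1:ℝ)/2)
          ≤ (∑' x : Fin d → ℤ, (w a * (‖f (x - p a)‖₊ : ℝ≥0∞)) ^ (2:ℝ)) ^ ((1:ℝ)/2)
            + (∑' x : Fin d → ℤ, (∑ b ∈ s, w b * (‖f (x - p b)‖₊ : ℝ≥0∞)) ^ (2:ℝ)) ^ ((1:ℝ)/2) :=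
            minkowski_add _ _
        _ ≤ w a * (∑' x : Fin d → ℤ, (‖f x‖₊ : ℝ≥0∞) ^ (2:ℝ)) ^ ((1:ℝ)/2)
            + (∑ b ∈ s, w b) * (∑' x : Fin d → ℤ, (‖f x‖₊ : ℝ≥0∞) ^ (2:ℝ)) ^ ((1:ℝ)/2) := by
            refine add_le_add (le_of_eq ?_) ih
            rw [rpow_tsum_scalar, tsum_translate]
        _ = (w a + ∑ b ∈ s, w b) * (∑' x : Fin d → ℤ, (‖f x‖₊ : ℝ≥0∞) ^ (2:ℝ)) ^ ((1:ℝ)/2) :=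
            (add_mul _ _ _).symm

def wt (d t : ℕ) (y : Fin d → ℤ) : ℝ≥0 :=
  if y ∈ sphereS d t then ((sphereS d t).card : ℝ≥0)⁻¹ - ((latticeBall d t).card : ℝ≥0)⁻¹
  else ((latticeBall d t).card : ℝ≥0)⁻¹

lemma pointwise_bound {d t : ℕ} (ht : 1 ≤ t) (hS : (sphereS d t).Nonempty)
    (f : (Fin d → ℤ) → ℂ) (x : Fin d → ℤ) :
    (‖Mop d t f x - Sop d t f x‖₊ : ℝ≥0∞)
      ≤ ∑ y ∈ latticeBall d t, (wt d t y : ℝ≥0∞) * (‖f (x - y)‖₊ : ℝ≥0∞) := by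
  have hsub := sphere_subset_ball (d := d) ht
  set B := latticeBall d t with hB
  set S := sphereS d t with hSd
  have hs0 : 0 < S.card := Finset.card_pos.2 hS
  have hb0 : 0 < B.card := Finset.card_pos.2 (hS.mono hsub)
  have hsb : S.card ≤ B.card := Finset.card_le_card hsub
  have hs0' : (0:ℝ) < S.card := by exact_mod_cast hs0
  have hb0' : (0:ℝ) < B.card := by exact_mod_cast hb0
  have hsb' : (S.card:ℝ) ≤ B.card := by exact_mod_cast hsb
  have hinvR : ((B.card : ℝ))⁻¹ ≤ ((S.card : ℝ))⁻¹ := by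
    apply inv_anti₀ hs0' hsb'
  have hinv : ((B.card : ℝ≥0))⁻¹ ≤ ((S.card : ℝ≥0))⁻¹ := by
    rw [← NNReal.coe_le_coe]
    push_cast
    exact hinvR
  -- the coefficient identity
  have hid : Mop d t f x - Sop d t f x
      = ∑ y ∈ B, ((B.card : ℂ)⁻¹ - (if y ∈ S then (S.card : ℂ)⁻¹ else 0)) * f (x - y) := by
    have h1 : Mop d t f x = ∑ y ∈ B, (B.card : ℂ)⁻¹ * f (x - y) := Finset.mul_sum _ _ _
    have h2 : Sop d t f x = ∑ y ∈ B, (if y ∈ S then (S.card : ℂ)⁻¹ * f (x - y) else 0) := by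
      rw [Sop, Finset.mul_sum]
      rw [← Finset.sum_subset hsub (f := fun y => if y ∈ S then (S.card : ℂ)⁻¹ * f (x - y) else 0)
        (fun y _ hyS => if_neg hyS)]
      exact (Finset.sum_congr rfl fun y hy => (if_pos hy).symm)
    rw [h1, h2, ← Finset.sum_sub_distrib]
    refine Finset.sum_congr rfl fun y _ => ?_
    split_ifs <;> ring
  rw [hid]
  calc (‖∑ y ∈ B, ((B.card : ℂ)⁻¹ - (if y ∈ S then (S.card : ℂ)⁻¹ else 0)) * f (x - y)‖₊ : ℝ≥0∞)
      ≤ ∑ y ∈ B, (‖((B.card : ℂ)⁻¹ - (if y ∈ S then (S.card : ℂ)⁻¹ else 0)) * f (x - y)‖₊ : ℝ≥0∞) := by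
        rw [← ENNReal.coe_finset_sum]
        exact ENNReal.coe_le_coe.2 (nnnorm_sum_le _ _)
    _ ≤ ∑ y ∈ B, (wt d t y : ℝ≥0∞) * (‖f (x - y)‖₊ : ℝ≥0∞) := by
        refine Finset.sum_le_sum fun y _ => ?_
        rw [nnnorm_mul, ENNReal.coe_mul]
        refine mul_le_mul_left (ENNReal.coe_le_coe.2 (le_of_eq ?_)) _
        -- ‖c y‖₊ = wt d t y
        rw [wt, ← hB, ← hSd]
        split_ifs with hy
        · refine NNReal.coe_injective ?_
          rw [coe_nnnorm, NNReal.coe_sub hinv, NNReal.coe_inv, NNReal.coe_inv,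
            NNReal.coe_natCast, NNReal.coe_natCast,
            show ((B.card : ℂ)⁻¹ - (S.card : ℂ)⁻¹)
              = ((((B.card:ℝ))⁻¹ - ((S.card:ℝ))⁻¹ : ℝ) : ℂ) by push_cast; ring,
            Complex.norm_real, Real.norm_eq_abs, abs_of_nonpos (by linarith)]
          ring
        · refine NNReal.coe_injective ?_
          rw [coe_nnnorm, NNReal.coe_inv, NNReal.coe_natCast,
            show ((B.card : ℂ)⁻¹ - 0) = ((((B.card:ℝ))⁻¹ : ℝ) : ℂ) by push_cast; ring,
            Complex.norm_real, Real.norm_eq_abs, abs_of_nonneg (by positivity)]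

lemma weight_sum {d t : ℕ} (hd : 0 < d) (ht : 1 ≤ t) (htd : t^2 ≤ d)
    (hS : (sphereS d t).Nonempty) :
    ((∑ y ∈ latticeBall d t, wt d t y : ℝ≥0) : ℝ) ≤ min 2 (4 * (t:ℝ)^2 / d) := by
  have hsub := sphere_subset_ball (d := d) ht
  set B := latticeBall d t with hB
  set S := sphereS d t with hSd
  have hs0 : 0 < S.card := Finset.card_pos.2 hS
  have hb0 : 0 < B.card := Finset.card_pos.2 (hS.mono hsub)
  have hsb : S.card ≤ B.card := Finset.card_le_card hsub
  have hs0' : (0:ℝ) < S.card := by exact_mod_cast hs0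
  have hb0' : (0:ℝ) < B.card := by exact_mod_cast hb0
  have hsb' : (S.card:ℝ) ≤ B.card := by exact_mod_cast hsb
  have hinvR : ((B.card : ℝ))⁻¹ ≤ ((S.card : ℝ))⁻¹ := inv_anti₀ hs0' hsb'
  have hinv : ((B.card : ℝ≥0))⁻¹ ≤ ((S.card : ℝ≥0))⁻¹ := by
    rw [← NNReal.coe_le_coe]; push_cast; exact hinvR
  set N := B.card - S.card with hN
  have hNR : (N : ℝ) = (B.card : ℝ) - S.card := by
    rw [hN]; push_cast [hsb]; ring
  -- compute the sum
  have hsum : ((∑ y ∈ B, wt d t y : ℝ≥0) : ℝ) = 2 * N / B.card := by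
    have hsplit : (∑ y ∈ B, wt d t y : ℝ≥0)
        = ∑ y ∈ B \ S, (B.card : ℝ≥0)⁻¹ + ∑ y ∈ S, ((S.card : ℝ≥0)⁻¹ - (B.card : ℝ≥0)⁻¹) := by
      rw [← Finset.sum_sdiff hsub]
      congr 1
      · exact Finset.sum_congr rfl fun y hy => by
          rw [wt, ← hSd, ← hB, if_neg (Finset.mem_sdiff.1 hy).2]
      · exact Finset.sum_congr rfl fun y hy => by rw [wt, ← hSd, ← hB, if_pos hy]
    rw [hsplit]
    push_cast
    rw [Finset.sum_const, Finset.sum_const, Finset.card_sdiff_of_subset hsub]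
    push_cast [NNReal.coe_sub hinv, hsb]
    rw [← hN]
    field_simp
    rw [hNR]
    have h1 : (B.card:ℝ) * (B.card:ℝ)⁻¹ = 1 := mul_inv_cancel₀ hb0'.ne'
    have h2 : (S.card:ℝ) * (S.card:ℝ)⁻¹ = 1 := mul_inv_cancel₀ hs0'.ne'
    linear_combination (2 * ((B.card:ℝ) - S.card)) * h1 + ((B.card:ℝ) - S.card) * (B.card:ℝ) * (B.card:ℝ)⁻¹ * h2 + (B.card:ℝ) * (B.card:ℝ)⁻¹ * hNR
  rw [hsum, le_min_iff]
  have hNb : (N:ℝ) ≤ B.card := by rw [hNR]; linarith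
  have hkey : ((N:ℝ)) * d ≤ (t + t*t) * B.card := by exact_mod_cast key_count hd ht htd
  have hd' : (0:ℝ) < d := by exact_mod_cast hd
  constructor
  · rw [div_le_iff₀ hb0']
    linarith
  · rw [div_le_div_iff₀ hb0' hd']
    have htt : (t:ℝ) + t*t ≤ 2 * t^2 := by
      have h1 : (1:ℝ) ≤ t := by exact_mod_cast ht
      nlinarith
    nlinarith

lemma sum_min_bound (d : ℕ) (hd : 4 ≤ d) (I : Finset ℕ) (hI : ∀ n ∈ I, 4^n ≤ d) :
    ∑ n ∈ I, min (2:ℝ) (4 * (4:ℝ)^n / d) ≤ 6 := by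
  have hd0 : (0:ℝ) < d := by exact_mod_cast (by omega : 0 < d)
  set M := Nat.log 4 d with hM
  have h4M : ((4:ℝ))^M ≤ d := by exact_mod_cast Nat.pow_log_le_self 4 (by omega)
  have hsub : I ⊆ Finset.range (M+1) := fun n hn => Finset.mem_range.2 (Nat.lt_succ_of_le
    ((Nat.le_log_iff_pow_le (by norm_num) (by omega)).2 (hI n hn)))
  have hnonneg : ∀ n : ℕ, (0:ℝ) ≤ min 2 (4 * (4:ℝ)^n / d) := fun n =>
    le_min (by norm_num) (by positivity)
  calc ∑ n ∈ I, min (2:ℝ) (4 * (4:ℝ)^n / d)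
      ≤ ∑ n ∈ Finset.range (M+1), min (2:ℝ) (4 * (4:ℝ)^n / d) :=
        Finset.sum_le_sum_of_subset_of_nonneg hsub (fun n _ _ => hnonneg n)
    _ ≤ (∑ n ∈ Finset.range M, 4 * (4:ℝ)^n / d) + 2 := by
        rw [Finset.sum_range_succ]
        exact add_le_add (Finset.sum_le_sum fun n _ => min_le_right _ _) (min_le_left _ _)
    _ ≤ 4/3 + 2 := by
        have hgeom : ∑ n ∈ Finset.range M, (4:ℝ)^n = ((4:ℝ)^M - 1)/3 := by
          rw [geom_sum_eq (by norm_num)]; norm_num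
        have heq : ∑ n ∈ Finset.range M, 4 * (4:ℝ)^n / d = 4 * (((4:ℝ)^M - 1)/3) / d := by
          rw [← Finset.sum_div, ← Finset.mul_sum, hgeom]
        rw [heq]
        have h2 : (4:ℝ)*(((4:ℝ)^M - 1)/3)/d ≤ 4/3 := by
          rw [div_le_iff₀ hd0]
          nlinarith
        linarith
    _ ≤ 6 := by norm_num

/-- Lemma 2.6: for `d ≥ 4` and `f ∈ l²(ℤ^d)`,
`‖ sup_{t ∈ 𝔻, t ≤ √d} |(𝓜_t - 𝓢_t) f| ‖_{l²(ℤ^d)} ≤ 6 ‖f‖_{l²(ℤ^d)}`. -/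
theorem dyadic_maximal_M_sub_S_l2_bound (d : ℕ) (hd : 4 ≤ d)
    (f : (Fin d → ℤ) → ℂ) (hf : Memℓp f 2) :
    (∑' x : Fin d → ℤ,
        (⨆ (n : ℕ) (_ : ((2 ^ n : ℕ) : ℝ) ≤ Real.sqrt d),
          (‖Mop d (2 ^ n) f x - Sop d (2 ^ n) f x‖₊ : ℝ≥0∞)) ^ (2 : ℝ)) ^ ((1 : ℝ) / 2)
      ≤ 6 * (∑' x : Fin d → ℤ, (‖f x‖₊ : ℝ≥0∞) ^ (2 : ℝ)) ^ ((1 : ℝ) / 2) := by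
  classical
  have hd0 : 0 < d := by omega
  set Nf := (∑' x : Fin d → ℤ, (‖f x‖₊ : ℝ≥0∞) ^ (2:ℝ)) ^ ((1:ℝ)/2) with hNf
  -- the set of admissible dyadic exponents
  set I : Finset ℕ := (Finset.range (d+1)).filter
    (fun n => ((2 ^ n : ℕ) : ℝ) ≤ Real.sqrt d) with hI
  have hfour : ∀ n : ℕ, ((2 ^ n : ℕ) : ℝ) ≤ Real.sqrt d → 4^n ≤ d := by
    intro n hn
    have h2 : ((2^n:ℕ):ℝ) * ((2^n:ℕ):ℝ) ≤ Real.sqrt d * Real.sqrt d :=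
      mul_self_le_mul_self (by positivity) hn
    rw [Real.mul_self_sqrt (by positivity)] at h2
    have h3 : (4:ℕ)^n = 2^n * 2^n := by
      rw [show (4:ℕ) = 2*2 from rfl, mul_pow]
    rw [h3]
    exact_mod_cast h2
  have hmemI : ∀ n : ℕ, ((2 ^ n : ℕ) : ℝ) ≤ Real.sqrt d → n ∈ I := by
    intro n hn
    refine Finset.mem_filter.2 ⟨Finset.mem_range.2 ?_, hn⟩
    have h1 : n < 2^n := Nat.lt_two_pow_self
    have h2 : 2^n ≤ 4^n := Nat.pow_le_pow_left (by norm_num) n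
    have := hfour n hn
    omega
  have hsq : ∀ n : ℕ, (2^n)^2 = 4^n := by
    intro n
    rw [show (4:ℕ) = 2*2 from rfl, mul_pow, sq]
  have htd' : ∀ n ∈ I, (2^n)^2 ≤ d := by
    intro n hn
    rw [hsq]
    exact hfour n (Finset.mem_filter.1 hn).2
  have hSne : ∀ n ∈ I, (sphereS d (2^n)).Nonempty := by
    intro n hn
    refine sphere_nonempty (le_trans (Nat.le_self_pow (by norm_num) _) (htd' n hn))
  -- the sigma-indexed weighted family
  set A : Finset ((_ : ℕ) × (Fin d → ℤ)) := I.sigma (fun n => latticeBall d (2^n)) with hA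
  set wA : ((_ : ℕ) × (Fin d → ℤ)) → ℝ≥0∞ := fun a => (wt d (2^a.1) a.2 : ℝ≥0∞) with hwA
  -- pointwise bound
  have step1 : ∀ x : Fin d → ℤ,
      (⨆ (n : ℕ) (_ : ((2 ^ n : ℕ) : ℝ) ≤ Real.sqrt d),
        (‖Mop d (2 ^ n) f x - Sop d (2 ^ n) f x‖₊ : ℝ≥0∞))
      ≤ ∑ a ∈ A, wA a * (‖f (x - a.2)‖₊ : ℝ≥0∞) := by
    intro x
    rw [hA, Finset.sum_sigma]
    refine iSup₂_le fun n hn => ?_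
    have hmem : n ∈ I := hmemI n hn
    refine le_trans (pointwise_bound Nat.one_le_two_pow (hSne n hmem) f x) ?_
    exact Finset.single_le_sum
      (f := fun n => ∑ y ∈ latticeBall d (2^n), (wt d (2^n) y : ℝ≥0∞) * (‖f (x - y)‖₊ : ℝ≥0∞))
      (fun i _ => zero_le) hmem
  -- total weight bound
  have step3 : ∑ a ∈ A, wA a ≤ 6 := by
    rw [hA, Finset.sum_sigma]
    have hc : ∀ n ∈ I, ∑ y ∈ latticeBall d (2^n), ((wt d (2^n) y : ℝ≥0) : ℝ≥0∞)
        = ((∑ y ∈ latticeBall d (2^n), wt d (2^n) y : ℝ≥0) : ℝ≥0∞) := fun n _ =>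
      (ENNReal.coe_finset_sum _ _).symm
    calc ∑ n ∈ I, ∑ y ∈ latticeBall d (2^n), wA ⟨n, y⟩
        = ((∑ n ∈ I, ∑ y ∈ latticeBall d (2^n), wt d (2^n) y : ℝ≥0) : ℝ≥0∞) := by
          rw [ENNReal.coe_finset_sum]
          exact Finset.sum_congr rfl hc
      _ ≤ ((6:ℝ≥0) : ℝ≥0∞) := by
          refine ENNReal.coe_le_coe.2 ?_
          rw [← NNReal.coe_le_coe]
          push_cast
          have hterm : ∀ n ∈ I,
              ∑ y ∈ latticeBall d (2^n), ((wt d (2^n) y : ℝ≥0) : ℝ)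
                ≤ min (2:ℝ) (4 * (4:ℝ)^n / d) := by
            intro n hn
            have h0 := weight_sum hd0 Nat.one_le_two_pow (htd' n hn) (hSne n hn)
            rw [NNReal.coe_sum] at h0
            refine le_trans h0 ?_
            have h1 : (((2:ℕ)^n : ℕ):ℝ)^2 = (4:ℝ)^n := by
              push_cast
              rw [← pow_mul, mul_comm n 2, pow_mul]
              norm_num
            rw [h1]
          calc ∑ n ∈ I, ∑ y ∈ latticeBall d (2^n), ((wt d (2^n) y : ℝ≥0) : ℝ)
              ≤ ∑ n ∈ I, min (2:ℝ) (4 * (4:ℝ)^n / d) := Finset.sum_le_sum hterm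
            _ ≤ 6 := sum_min_bound d hd I (fun n hn => hfour n (Finset.mem_filter.1 hn).2)
      _ = 6 := by norm_num
  calc (∑' x : Fin d → ℤ,
        (⨆ (n : ℕ) (_ : ((2 ^ n : ℕ) : ℝ) ≤ Real.sqrt d),
          (‖Mop d (2 ^ n) f x - Sop d (2 ^ n) f x‖₊ : ℝ≥0∞)) ^ (2 : ℝ)) ^ ((1 : ℝ) / 2)
      ≤ (∑' x : Fin d → ℤ, (∑ a ∈ A, wA a * (‖f (x - a.2)‖₊ : ℝ≥0∞)) ^ (2:ℝ)) ^ ((1:ℝ)/2) := by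
        refine ENNReal.rpow_le_rpow ?_ (by norm_num)
        refine ENNReal.tsum_le_tsum fun x => ?_
        exact ENNReal.rpow_le_rpow (step1 x) (by norm_num)
    _ ≤ (∑ a ∈ A, wA a) * Nf := master A wA (fun a => a.2) f
    _ ≤ 6 * Nf := mul_le_mul_left step3 Nf
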